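/- Let λ be the discrete measure λ = (1/j) Σ_{l=1}^j δ_{ψ_l} with 0 ≤ ψ_1 ≤ ... ≤ ψ_j ≤ 1, and let η be Lebesgue measure on [0,1]. Then the discrepancy D(λ,η) = sup{ |λ(I) - η(I)| : I = (a,b) ⊂ [0,1] } equals the maximum over l = 1,...,j and i ∈ {0,1} of the quantities |ψ_l - (l-i)/j|, |1 - ψ_l - (j-l+i)/j|, and over l,k and i ∈ {-1,1} of |ψ_l - ψ_k - (l-k+i)/j|. -/

import Mathlib

open scoped Classical

namespace DiscAux

variable (j : ℕ) (ψ : ℕ → ℝ)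

noncomputable def S : Set ℝ :=
  {e : ℝ | ∃ a b : ℝ, 0 ≤ a ∧ a ≤ b ∧ b ≤ 1 ∧
      e = |(((Finset.Icc 1 j).filter fun l => ψ l ∈ Set.Ioo a b).card : ℝ) / j
            - (b - a)|}

lemma mem_S {a b : ℝ} (h0 : 0 ≤ a) (hab : a ≤ b) (hb1 : b ≤ 1) :
    |(((Finset.Icc 1 j).filter fun l => ψ l ∈ Set.Ioo a b).card : ℝ) / j - (b - a)| ∈ S j ψ :=
  ⟨a, b, h0, hab, hb1, rfl⟩

lemma S_nonempty : (S j ψ).Nonempty :=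
  ⟨_, mem_S j ψ (le_refl (0:ℝ)) (le_refl 0) zero_le_one⟩

lemma S_bdd (hj : 1 ≤ j) : BddAbove (S j ψ) := by
  refine ⟨2, fun s hs => ?_⟩
  obtain ⟨a, b, h0, hab, hb1, rfl⟩ := hs
  have hj0 : (0:ℝ) < j := by exact_mod_cast hj
  have hcard : (((Finset.Icc 1 j).filter fun l => ψ l ∈ Set.Ioo a b).card : ℝ) ≤ j := by
    have h1 := Finset.card_filter_le (Finset.Icc 1 j) fun l => ψ l ∈ Set.Ioo a b
    have h2 : (Finset.Icc 1 j).card = j := by simp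
    exact_mod_cast h1.trans_eq h2
  have h3 : (((Finset.Icc 1 j).filter fun l => ψ l ∈ Set.Ioo a b).card : ℝ)/j ≤ 1 := by
    rw [div_le_one hj0]; exact hcard
  have h4 : (0:ℝ) ≤ (((Finset.Icc 1 j).filter fun l => ψ l ∈ Set.Ioo a b).card : ℝ)/j := by
    positivity
  rw [abs_le]; constructor <;> linarith

lemma sSup_S_nonneg (hj : 1 ≤ j) : 0 ≤ sSup (S j ψ) := by
  have h := le_csSup (S_bdd j ψ hj) (mem_S j ψ (le_refl (0:ℝ)) (le_refl 0) zero_le_one)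
  exact le_trans (abs_nonneg _) h

lemma le_sSup_of_approx (hj : 1 ≤ j) (E : ℝ)
    (h : ∀ ε > 0, ∃ s ∈ S j ψ, E - ε ≤ s) : E ≤ sSup (S j ψ) := by
  refine le_of_forall_pos_le_add fun ε hε => ?_
  obtain ⟨s, hs, h1⟩ := h ε hε
  have := le_csSup (S_bdd j ψ hj) hs
  linarith


section Ls
variable (hj : 1 ≤ j)
  (hmem : ∀ l ∈ Finset.Icc 1 j, ψ l ∈ Set.Icc (0 : ℝ) 1)
  (hmono : ∀ l k, 1 ≤ l → l ≤ k → k ≤ j → ψ l ≤ ψ k)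

include hj hmem hmono

lemma L1 (l : ℕ) (hl : l ∈ Finset.Icc 1 j) :
    ψ l - ((l:ℝ) - 1)/j ≤ sSup (S j ψ) := by
  have hj0 : (0:ℝ) < j := by exact_mod_cast hj
  rw [Finset.mem_Icc] at hl
  have hψ := hmem l (Finset.mem_Icc.mpr hl)
  rcases le_or_gt (ψ l) 0 with h0 | h0
  · have h1 : (0:ℝ) ≤ ((l:ℝ) - 1)/j := by
      apply div_nonneg _ hj0.le
      have : (1:ℝ) ≤ l := by exact_mod_cast hl.1
      linarith
    have := sSup_S_nonneg j ψ hj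
    linarith
  · apply le_sSup_of_approx j ψ hj
    intro ε hε
    set δ := min ε (ψ l) with hδdef
    have hδ0 : 0 < δ := lt_min hε h0
    have hδε : δ ≤ ε := min_le_left _ _
    have hδψ : δ ≤ ψ l := min_le_right _ _
    set b := ψ l - δ with hbdef
    have hb0 : 0 ≤ b := by simp [hbdef]; linarith
    have hb1 : b ≤ 1 := by simp [hbdef]; linarith [hψ.2, hδ0]
    refine ⟨_, mem_S j ψ (le_refl (0:ℝ)) hb0 hb1, ?_⟩
    have hsub : (Finset.Icc 1 j).filter (fun m => ψ m ∈ Set.Ioo 0 b) ⊆ Finset.Icc 1 (l-1) := by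
      intro m hm
      rw [Finset.mem_filter, Finset.mem_Icc] at hm
      obtain ⟨⟨hm1, hmj⟩, hma, hmb⟩ := hm
      rw [Finset.mem_Icc]
      refine ⟨hm1, ?_⟩
      by_contra hc
      have hlm : l ≤ m := by omega
      have := hmono l m hl.1 hlm hmj
      have : ψ m < ψ l := lt_of_lt_of_le hmb (by linarith)
      linarith
    have hcard : (((Finset.Icc 1 j).filter (fun m => ψ m ∈ Set.Ioo 0 b)).card : ℝ) ≤ (l:ℝ) - 1 := by
      have h1 := Finset.card_le_card hsub
      have h2 : (Finset.Icc 1 (l-1)).card = l - 1 := by simp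
      have h3 : ((Finset.Icc 1 j).filter (fun m => ψ m ∈ Set.Ioo 0 b)).card + 1 ≤ l := by omega
      have h4 : (((Finset.Icc 1 j).filter (fun m => ψ m ∈ Set.Ioo 0 b)).card : ℝ) + 1 ≤ (l:ℝ) := by
        exact_mod_cast h3
      linarith
    have hdiv : (((Finset.Icc 1 j).filter (fun m => ψ m ∈ Set.Ioo 0 b)).card : ℝ)/j ≤ ((l:ℝ)-1)/j := by
      gcongr
    have hneg := neg_le_abs ((((Finset.Icc 1 j).filter (fun m => ψ m ∈ Set.Ioo 0 b)).card : ℝ)/j - (b - 0))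
    linarith

lemma L2 (l : ℕ) (hl : l ∈ Finset.Icc 1 j) :
    (l:ℝ)/j - ψ l ≤ sSup (S j ψ) := by
  have hj0 : (0:ℝ) < j := by exact_mod_cast hj
  rw [Finset.mem_Icc] at hl
  have hψ := hmem l (Finset.mem_Icc.mpr hl)
  have hlj : (l:ℝ) ≤ j := by exact_mod_cast hl.2
  rcases le_or_gt 1 (ψ l) with h0 | h0
  · have h1 : (l:ℝ)/j ≤ 1 := by rw [div_le_one hj0]; exact hlj
    have := sSup_S_nonneg j ψ hj
    linarith
  · apply le_sSup_of_approx j ψ hj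
    intro ε hε
    set δ := min ε (1 - ψ l) with hδdef
    have hδ0 : 0 < δ := lt_min hε (by linarith)
    have hδε : δ ≤ ε := min_le_left _ _
    have hδψ : δ ≤ 1 - ψ l := min_le_right _ _
    set a := ψ l + δ with hadef
    have ha0 : 0 ≤ a := by simp [hadef]; linarith [hψ.1]
    have ha1 : a ≤ 1 := by simp [hadef]; linarith
    refine ⟨_, mem_S j ψ ha0 ha1 (le_refl (1:ℝ)), ?_⟩
    have hsub : (Finset.Icc 1 j).filter (fun m => ψ m ∈ Set.Ioo a 1) ⊆ Finset.Icc (l+1) j := by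
      intro m hm
      rw [Finset.mem_filter, Finset.mem_Icc] at hm
      obtain ⟨⟨hm1, hmj⟩, hma, hmb⟩ := hm
      rw [Finset.mem_Icc]
      refine ⟨?_, hmj⟩
      by_contra hc
      have hlm : m ≤ l := by omega
      have := hmono m l hm1 hlm hl.2
      have : ψ l > ψ l := by
        calc ψ l ≥ ψ m := this
        _ > a := hma
        _ ≥ ψ l := by simp [hadef]; linarith
      linarith
    have hcard : (((Finset.Icc 1 j).filter (fun m => ψ m ∈ Set.Ioo a 1)).card : ℝ) ≤ (j:ℝ) - l := by
      have h1 := Finset.card_le_card hsub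
      have h2 : (Finset.Icc (l+1) j).card = j - l := by rw [Nat.card_Icc]; omega
      have h3 : ((Finset.Icc 1 j).filter (fun m => ψ m ∈ Set.Ioo a 1)).card + l ≤ j := by omega
      have h4 : (((Finset.Icc 1 j).filter (fun m => ψ m ∈ Set.Ioo a 1)).card : ℝ) + l ≤ (j:ℝ) := by
        exact_mod_cast h3
      linarith
    have hdiv : (((Finset.Icc 1 j).filter (fun m => ψ m ∈ Set.Ioo a 1)).card : ℝ)/j ≤ ((j:ℝ)-l)/j := by
      gcongr
    have hjj : ((j:ℝ)-l)/j = 1 - l/j := by field_simp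
    have hneg := neg_le_abs ((((Finset.Icc 1 j).filter (fun m => ψ m ∈ Set.Ioo a 1)).card : ℝ)/j - (1 - a))
    linarith

lemma L3 (l k : ℕ) (hl : l ∈ Finset.Icc 1 j) (hk : k ∈ Finset.Icc 1 j) (hlk : l ≤ k) :
    ((k:ℝ) - l + 1)/j - (ψ k - ψ l) ≤ sSup (S j ψ) := by
  have hj0 : (0:ℝ) < j := by exact_mod_cast hj
  have hψl := hmem l hl
  have hψk := hmem k hk
  rw [Finset.mem_Icc] at hl hk
  have hl1 : (1:ℝ) ≤ l := by exact_mod_cast hl.1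
  have hkj : (k:ℝ) ≤ j := by exact_mod_cast hk.2
  have hlkR : (l:ℝ) ≤ k := by exact_mod_cast hlk
  rcases le_or_gt (ψ l) 0 with h0 | h0
  · -- ψ l = 0, use L2 at k
    have hψl0 : ψ l = 0 := le_antisymm h0 hψl.1
    have h2 := L2 j ψ hj hmem hmono k (Finset.mem_Icc.mpr hk)
    have hd : ((k:ℝ) - l + 1)/j ≤ (k:ℝ)/j := by gcongr <;> linarith
    linarith
  · rcases le_or_gt 1 (ψ k) with h1 | h1
    · have hψk1 : ψ k = 1 := le_antisymm hψk.2 h1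
      have h2 := L1 j ψ hj hmem hmono l (Finset.mem_Icc.mpr hl)
      have hd : ((k:ℝ) - l + 1)/j + ((l:ℝ) - 1)/j ≤ 1 := by
        rw [← add_div]
        have he : ((k:ℝ) - l + 1) + ((l:ℝ) - 1) = k := by ring
        rw [he, div_le_one hj0]
        exact hkj
      linarith
    · apply le_sSup_of_approx j ψ hj
      intro ε hε
      set δ := min (ε/2) (min (ψ l) (1 - ψ k)) with hδdef
      have hδ0 : 0 < δ := lt_min (by linarith) (lt_min h0 (by linarith))
      have hδε : δ ≤ ε/2 := min_le_left _ _
      have hδl : δ ≤ ψ l := le_trans (min_le_right _ _) (min_le_left _ _)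
      have hδk : δ ≤ 1 - ψ k := le_trans (min_le_right _ _) (min_le_right _ _)
      have hψlk : ψ l ≤ ψ k := hmono l k hl.1 hlk hk.2
      set a := ψ l - δ with hadef
      set b := ψ k + δ with hbdef
      have ha0 : 0 ≤ a := by simp [hadef]; linarith
      have hab : a ≤ b := by simp [hadef, hbdef]; linarith
      have hb1 : b ≤ 1 := by simp [hbdef]; linarith
      refine ⟨_, mem_S j ψ ha0 hab hb1, ?_⟩
      have hsub : Finset.Icc l k ⊆ (Finset.Icc 1 j).filter (fun m => ψ m ∈ Set.Ioo a b) := by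
        intro m hm
        rw [Finset.mem_Icc] at hm
        rw [Finset.mem_filter, Finset.mem_Icc]
        have hmj : m ≤ j := le_trans hm.2 hk.2
        have hm1 : 1 ≤ m := le_trans hl.1 hm.1
        refine ⟨⟨hm1, hmj⟩, ?_, ?_⟩
        · have := hmono l m hl.1 hm.1 hmj
          simp only [hadef]; linarith
        · have := hmono m k hm1 hm.2 hk.2
          simp only [hbdef]; linarith
      have hcard : ((k:ℝ) - l + 1) ≤ (((Finset.Icc 1 j).filter (fun m => ψ m ∈ Set.Ioo a b)).card : ℝ) := by
        have h1 := Finset.card_le_card hsub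
        have h2 : (Finset.Icc l k).card = k + 1 - l := by rw [Nat.card_Icc]
        have h3 : k + 1 - l ≤ ((Finset.Icc 1 j).filter (fun m => ψ m ∈ Set.Ioo a b)).card := by omega
        have h4 : k + 1 ≤ ((Finset.Icc 1 j).filter (fun m => ψ m ∈ Set.Ioo a b)).card + l := by omega
        have h5 : (k:ℝ) + 1 ≤ (((Finset.Icc 1 j).filter (fun m => ψ m ∈ Set.Ioo a b)).card : ℝ) + l := by
          exact_mod_cast h4
        linarith
      have hdiv : ((k:ℝ) - l + 1)/j ≤ (((Finset.Icc 1 j).filter (fun m => ψ m ∈ Set.Ioo a b)).card : ℝ)/j := by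
        gcongr
      have hself := le_abs_self ((((Finset.Icc 1 j).filter (fun m => ψ m ∈ Set.Ioo a b)).card : ℝ)/j - (b - a))
      have hba : b - a = ψ k - ψ l + 2*δ := by simp [hadef, hbdef]; ring
      linarith

lemma L4 (l k : ℕ) (hl : l ∈ Finset.Icc 1 j) (hk : k ∈ Finset.Icc 1 j) :
    ψ l - ψ k - ((l:ℝ) - k - 1)/j ≤ sSup (S j ψ) := by
  have hj0 : (0:ℝ) < j := by exact_mod_cast hj
  have hψl := hmem l hl
  have hψk := hmem k hk
  rcases le_or_gt l k with hlk | hkl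
  · have h3 := L3 j ψ hj hmem hmono l k hl hk hlk
    have he : ((l:ℝ) - k - 1)/j = -(((k:ℝ) - l + 1)/j) := by ring
    linarith
  · -- k < l
    rw [Finset.mem_Icc] at hl hk
    have hklR : (k:ℝ) < l := by exact_mod_cast hkl
    rcases le_or_gt (ψ l) (ψ k) with hle | hgt
    · have hnum : (0:ℝ) ≤ ((l:ℝ) - k - 1)/j := by
        apply div_nonneg _ hj0.le
        have : (k:ℝ) + 1 ≤ l := by exact_mod_cast hkl
        linarith
      have := sSup_S_nonneg j ψ hj
      linarith
    · apply le_sSup_of_approx j ψ hj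
      intro ε hε
      set δ := min (ε/2) ((ψ l - ψ k)/2) with hδdef
      have hδ0 : 0 < δ := lt_min (by linarith) (by linarith)
      have hδε : δ ≤ ε/2 := min_le_left _ _
      have hδg : δ ≤ (ψ l - ψ k)/2 := min_le_right _ _
      set a := ψ k + δ with hadef
      set b := ψ l - δ with hbdef
      have ha0 : 0 ≤ a := by simp [hadef]; linarith [hψk.1]
      have hab : a ≤ b := by simp [hadef, hbdef]; linarith
      have hb1 : b ≤ 1 := by simp [hbdef]; linarith [hψl.2]
      refine ⟨_, mem_S j ψ ha0 hab hb1, ?_⟩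
      have hsub : (Finset.Icc 1 j).filter (fun m => ψ m ∈ Set.Ioo a b) ⊆ Finset.Icc (k+1) (l-1) := by
        intro m hm
        rw [Finset.mem_filter, Finset.mem_Icc] at hm
        obtain ⟨⟨hm1, hmj⟩, hma, hmb⟩ := hm
        rw [Finset.mem_Icc]
        constructor
        · by_contra hc
          have hmk : m ≤ k := by omega
          have := hmono m k hm1 hmk hk.2
          have : ψ m ≤ a - δ := by simp [hadef]; linarith
          linarith
        · by_contra hc
          have hlm : l ≤ m := by omega
          have := hmono l m hl.1 hlm hmj
          have : b + δ ≤ ψ m := by simp [hbdef]; linarith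
          linarith
      have hcard : (((Finset.Icc 1 j).filter (fun m => ψ m ∈ Set.Ioo a b)).card : ℝ) ≤ (l:ℝ) - k - 1 := by
        have h1 := Finset.card_le_card hsub
        have h2 : (Finset.Icc (k+1) (l-1)).card = l - 1 + 1 - (k+1) := by rw [Nat.card_Icc]
        have h4 : ((Finset.Icc 1 j).filter (fun m => ψ m ∈ Set.Ioo a b)).card + k + 1 ≤ l := by omega
        have h5 : (((Finset.Icc 1 j).filter (fun m => ψ m ∈ Set.Ioo a b)).card : ℝ) + k + 1 ≤ (l:ℝ) := by
          exact_mod_cast h4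
        linarith
      have hdiv : (((Finset.Icc 1 j).filter (fun m => ψ m ∈ Set.Ioo a b)).card : ℝ)/j ≤ ((l:ℝ) - k - 1)/j := by
        gcongr
      have hneg := neg_le_abs ((((Finset.Icc 1 j).filter (fun m => ψ m ∈ Set.Ioo a b)).card : ℝ)/j - (b - a))
      have hba : b - a = ψ l - ψ k - 2*δ := by simp [hadef, hbdef]; ring
      linarith

end Ls

noncomputable def T : Set ℝ :=
  {e : ℝ | ∃ l ∈ Finset.Icc 1 j, ∃ i ∈ ({0, 1} : Set ℤ),
      e = |ψ l - ((l : ℝ) - (i : ℝ)) / j| ∨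
      e = |1 - ψ l - ((j : ℝ) - (l : ℝ) + (i : ℝ)) / j|} ∪
  {e : ℝ | ∃ l ∈ Finset.Icc 1 j, ∃ k ∈ Finset.Icc 1 j,
      ∃ i ∈ ({-1, 1} : Set ℤ),
      e = |ψ l - ψ k - ((l : ℝ) - (k : ℝ) + (i : ℝ)) / j|}

lemma T_nonempty (hj : 1 ≤ j) : (T j ψ).Nonempty := by
  refine ⟨|ψ 1 - (((1:ℕ) : ℝ) - ((0:ℤ) : ℝ)) / j|, Or.inl ⟨1, ?_, 0, ?_, Or.inl rfl⟩⟩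
  · simp [hj]
  · simp

lemma T_bdd (hj : 1 ≤ j) (hmem : ∀ l ∈ Finset.Icc 1 j, ψ l ∈ Set.Icc (0 : ℝ) 1) :
    BddAbove (T j ψ) := by
  have hj0 : (0:ℝ) < j := by exact_mod_cast hj
  refine ⟨5, ?_⟩
  have habs : ∀ x : ℝ, |x| ≤ 3*j → |x/(j:ℝ)| ≤ 3 := by
    intro x hx
    rw [abs_div, abs_of_pos hj0, div_le_iff₀ hj0]
    linarith
  rintro t (⟨l, hl, i, hi, (rfl | rfl)⟩ | ⟨l, hl, k, hk, i, hi, rfl⟩) <;>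
    rw [Finset.mem_Icc] at *
  · have hl1 : (1:ℝ) ≤ l := by exact_mod_cast hl.1
    have hlj : (l:ℝ) ≤ j := by exact_mod_cast hl.2
    have hψ := hmem l (Finset.mem_Icc.mpr hl)
    have hi' : (i:ℝ) = 0 ∨ (i:ℝ) = 1 := by
      have h2 : i = 0 ∨ i = 1 := by simpa using hi
      rcases h2 with h | h <;> simp [h]
    have hd : |((l:ℝ) - i)/j| ≤ 3 := by
      apply habs
      rw [abs_le]
      rcases hi' with h | h <;> rw [h] <;> constructor <;> linarith
    have h1 : |ψ l| ≤ 1 := by rw [abs_le]; exact ⟨by linarith [hψ.1], hψ.2⟩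
    calc |ψ l - ((l:ℝ) - i)/j| ≤ |ψ l| + |((l:ℝ) - i)/j| := abs_sub _ _
      _ ≤ 5 := by linarith
  · have hl1 : (1:ℝ) ≤ l := by exact_mod_cast hl.1
    have hlj : (l:ℝ) ≤ j := by exact_mod_cast hl.2
    have hψ := hmem l (Finset.mem_Icc.mpr hl)
    have hi' : (i:ℝ) = 0 ∨ (i:ℝ) = 1 := by
      have h2 : i = 0 ∨ i = 1 := by simpa using hi
      rcases h2 with h | h <;> simp [h]
    have hd : |((j:ℝ) - l + i)/j| ≤ 3 := by
      apply habs
      rw [abs_le]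
      rcases hi' with h | h <;> rw [h] <;> constructor <;> linarith
    have h1 : |1 - ψ l| ≤ 1 := by rw [abs_le]; constructor <;> [linarith [hψ.2]; linarith [hψ.1]]
    calc |1 - ψ l - ((j:ℝ) - l + i)/j| ≤ |1 - ψ l| + |((j:ℝ) - l + i)/j| := abs_sub _ _
      _ ≤ 5 := by linarith
  · have hl1 : (1:ℝ) ≤ l := by exact_mod_cast hl.1
    have hlj : (l:ℝ) ≤ j := by exact_mod_cast hl.2
    have hk1 : (1:ℝ) ≤ k := by exact_mod_cast hk.1
    have hkj : (k:ℝ) ≤ j := by exact_mod_cast hk.2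
    have hψl := hmem l (Finset.mem_Icc.mpr hl)
    have hψk := hmem k (Finset.mem_Icc.mpr hk)
    have hi' : (i:ℝ) = -1 ∨ (i:ℝ) = 1 := by
      have h2 : i = -1 ∨ i = 1 := by simpa using hi
      rcases h2 with h | h <;> simp [h]
    have hd : |((l:ℝ) - k + i)/j| ≤ 3 := by
      apply habs
      rw [abs_le]
      rcases hi' with h | h <;> rw [h] <;> constructor <;> linarith
    have h1 : |ψ l - ψ k| ≤ 1 := by
      rw [abs_le]; constructor <;> [linarith [hψl.1, hψk.2]; linarith [hψl.2, hψk.1]]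
    calc |ψ l - ψ k - ((l:ℝ) - k + i)/j| ≤ |ψ l - ψ k| + |((l:ℝ) - k + i)/j| := abs_sub _ _
      _ ≤ 5 := by linarith

lemma dir1 (hj : 1 ≤ j)
    (hmem : ∀ l ∈ Finset.Icc 1 j, ψ l ∈ Set.Icc (0 : ℝ) 1)
    (hmono : ∀ l k, 1 ≤ l → l ≤ k → k ≤ j → ψ l ≤ ψ k)
    (a b : ℝ) (h0 : 0 ≤ a) (hab : a ≤ b) (hb1 : b ≤ 1) :
    ∃ t ∈ T j ψ,
      |(((Finset.Icc 1 j).filter fun l => ψ l ∈ Set.Ioo a b).card : ℝ) / j - (b - a)| ≤ t := by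
  have hj0 : (0:ℝ) < j := by exact_mod_cast hj
  set F := (Finset.Icc 1 j).filter (fun l => ψ l ∈ Set.Ioo a b) with hFdef
  rcases F.eq_empty_or_nonempty with hFe | hFne
  · -- F empty
    have hcard0 : (F.card : ℝ) = 0 := by rw [hFe]; simp
    have hval : |(F.card : ℝ)/j - (b - a)| = b - a := by
      rw [hcard0, zero_div, zero_sub, abs_neg, abs_of_nonneg (by linarith)]
    rw [hval]
    set G := (Finset.Icc 1 j).filter (fun m => ψ m ≤ a) with hGdef
    rcases G.eq_empty_or_nonempty with hGe | hGne
    · have h1j : (1:ℕ) ∈ Finset.Icc 1 j := by simp [hj]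
      have h1a : a < ψ 1 := by
        by_contra hc; push_neg at hc
        have h1G : (1:ℕ) ∈ G := Finset.mem_filter.mpr ⟨h1j, hc⟩
        rw [hGe] at h1G; simp at h1G
      have h1b : b ≤ ψ 1 := by
        by_contra hc; push_neg at hc
        have h1F : (1:ℕ) ∈ F := Finset.mem_filter.mpr ⟨h1j, ⟨h1a, hc⟩⟩
        rw [hFe] at h1F; simp at h1F
      refine ⟨|ψ 1 - (((1:ℕ):ℝ) - ((1:ℤ):ℝ))/j|, Or.inl ⟨1, h1j, 1, by simp, Or.inl rfl⟩, ?_⟩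
      have hx : ψ 1 - (((1:ℕ):ℝ) - ((1:ℤ):ℝ))/j = ψ 1 := by push_cast; ring
      calc b - a ≤ ψ 1 := by linarith
        _ = ψ 1 - (((1:ℕ):ℝ) - ((1:ℤ):ℝ))/j := hx.symm
        _ ≤ |ψ 1 - (((1:ℕ):ℝ) - ((1:ℤ):ℝ))/j| := le_abs_self _
    · set km := G.max' hGne with hkm
      have hkG : km ∈ G := G.max'_mem hGne
      have hkIcc : km ∈ Finset.Icc 1 j := (Finset.mem_filter.mp hkG).1
      have hka : ψ km ≤ a := (Finset.mem_filter.mp hkG).2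
      have hkIcc' := Finset.mem_Icc.mp hkIcc
      rcases eq_or_lt_of_le hkIcc'.2 with hkj | hkj
      · refine ⟨|1 - ψ j - ((j:ℝ) - ((j:ℕ):ℝ) + ((0:ℤ):ℝ))/j|,
          Or.inl ⟨j, by simp [hj], 0, by simp, Or.inr rfl⟩, ?_⟩
        have hx : 1 - ψ j - ((j:ℝ) - ((j:ℕ):ℝ) + ((0:ℤ):ℝ))/j = 1 - ψ j := by push_cast; ring
        have hja : ψ j ≤ a := hkj ▸ hka
        calc b - a ≤ 1 - ψ j := by linarith
          _ = 1 - ψ j - ((j:ℝ) - ((j:ℕ):ℝ) + ((0:ℤ):ℝ))/j := hx.symm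
          _ ≤ |1 - ψ j - ((j:ℝ) - ((j:ℕ):ℝ) + ((0:ℤ):ℝ))/j| := le_abs_self _
      · have hk1Icc : km + 1 ∈ Finset.Icc 1 j := by rw [Finset.mem_Icc]; omega
        have hk1a : a < ψ (km+1) := by
          by_contra hc; push_neg at hc
          have hmem' : km + 1 ∈ G := Finset.mem_filter.mpr ⟨hk1Icc, hc⟩
          have := G.le_max' _ hmem'
          omega
        have hk1b : b ≤ ψ (km+1) := by
          by_contra hc; push_neg at hc
          have hF' : km+1 ∈ F := Finset.mem_filter.mpr ⟨hk1Icc, ⟨hk1a, hc⟩⟩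
          rw [hFe] at hF'; simp at hF'
        refine ⟨|ψ (km+1) - ψ km - ((↑(km+1):ℝ) - ((km:ℕ):ℝ) + ((-1:ℤ):ℝ))/j|,
          Or.inr ⟨km+1, hk1Icc, km, hkIcc, -1, by simp, rfl⟩, ?_⟩
        have hx : ψ (km+1) - ψ km - ((↑(km+1):ℝ) - ((km:ℕ):ℝ) + ((-1:ℤ):ℝ))/j
            = ψ (km+1) - ψ km := by push_cast; ring
        calc b - a ≤ ψ (km+1) - ψ km := by linarith
          _ = _ := hx.symm
          _ ≤ _ := le_abs_self _
  · -- F nonempty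
    set p := F.min' hFne with hp
    set q := F.max' hFne with hq
    have hpF : p ∈ F := F.min'_mem hFne
    have hqF : q ∈ F := F.max'_mem hFne
    have hpIcc := Finset.mem_Icc.mp (Finset.mem_filter.mp hpF).1
    have hpa : a < ψ p := (Finset.mem_filter.mp hpF).2.1
    have hpb : ψ p < b := (Finset.mem_filter.mp hpF).2.2
    have hqIcc := Finset.mem_Icc.mp (Finset.mem_filter.mp hqF).1
    have hqa : a < ψ q := (Finset.mem_filter.mp hqF).2.1
    have hqb : ψ q < b := (Finset.mem_filter.mp hqF).2.2
    have hpq : p ≤ q := F.min'_le q hqF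
    have hFeq : F = Finset.Icc p q := by
      apply Finset.Subset.antisymm
      · intro m hm
        rw [Finset.mem_Icc]
        exact ⟨F.min'_le m hm, F.le_max' m hm⟩
      · intro m hm
        rw [Finset.mem_Icc] at hm
        have hm1 : 1 ≤ m := le_trans hpIcc.1 hm.1
        have hmj : m ≤ j := le_trans hm.2 hqIcc.2
        exact Finset.mem_filter.mpr ⟨Finset.mem_Icc.mpr ⟨hm1, hmj⟩,
          lt_of_lt_of_le hpa (hmono p m hpIcc.1 hm.1 hmj),
          lt_of_le_of_lt (hmono m q hm1 hm.2 hqIcc.2) hqb⟩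
    have hcardN : F.card = q + 1 - p := by rw [hFeq, Nat.card_Icc]
    have hcardR : (F.card : ℝ) = (q:ℝ) - p + 1 := by
      rw [hcardN, Nat.cast_sub (by omega)]
      push_cast; ring
    rcases le_or_gt (b - a) ((F.card:ℝ)/j) with hsign | hsign
    · refine ⟨|ψ q - ψ p - ((q:ℝ) - (p:ℝ) + ((1:ℤ):ℝ))/j|,
        Or.inr ⟨q, Finset.mem_Icc.mpr hqIcc, p, Finset.mem_Icc.mpr hpIcc, 1, by simp, rfl⟩, ?_⟩
      rw [abs_of_nonneg (by linarith)]
      have hxx : -(ψ q - ψ p - ((q:ℝ) - (p:ℝ) + ((1:ℤ):ℝ))/j)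
          = ((q:ℝ) - p + 1)/j - (ψ q - ψ p) := by push_cast; ring
      have hneg := neg_le_abs (ψ q - ψ p - ((q:ℝ) - (p:ℝ) + ((1:ℤ):ℝ))/j)
      rw [hcardR]
      linarith
    · have habs : |(F.card:ℝ)/j - (b - a)| = (b - a) - (F.card:ℝ)/j := by
        rw [abs_of_neg (by linarith)]; ring
      rw [habs, hcardR]
      by_cases hp1 : p = 1
      · have hp1R : (p:ℝ) = 1 := by rw [hp1]; norm_num
        by_cases hqj : q = j
        · refine ⟨|ψ 1 - (((1:ℕ):ℝ) - ((1:ℤ):ℝ))/j|,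
            Or.inl ⟨1, by simp [hj], 1, by simp, Or.inl rfl⟩, ?_⟩
          have hqjR : (q:ℝ) = j := by rw [hqj]
          have hd : ((q:ℝ) - p + 1)/j = 1 := by
            rw [hp1R, hqjR]
            field_simp
            ring
          refine le_trans ?_ (abs_nonneg _)
          rw [hd]; linarith
        · have hq1Icc : q+1 ∈ Finset.Icc 1 j := by
            rw [Finset.mem_Icc]; omega
          have hq1a : a < ψ (q+1) :=
            lt_of_lt_of_le hqa (hmono q (q+1) (by omega) (by omega) (by omega))
          have hq1b : b ≤ ψ (q+1) := by
            by_contra hc; push_neg at hc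
            have hF' : q+1 ∈ F := Finset.mem_filter.mpr ⟨hq1Icc, ⟨hq1a, hc⟩⟩
            have := F.le_max' _ hF'
            omega
          refine ⟨|ψ (q+1) - ((↑(q+1):ℝ) - ((1:ℤ):ℝ))/j|,
            Or.inl ⟨q+1, hq1Icc, 1, by simp, Or.inl rfl⟩, ?_⟩
          have hinner : ψ (q+1) - ((↑(q+1):ℝ) - ((1:ℤ):ℝ))/j = ψ (q+1) - (q:ℝ)/j := by
            push_cast; ring
          calc (b - a) - ((q:ℝ) - p + 1)/j = (b - a) - (q:ℝ)/j := by rw [hp1R]; ring_nf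
            _ ≤ ψ (q+1) - (q:ℝ)/j := by linarith
            _ = _ := hinner.symm
            _ ≤ _ := le_abs_self _
      · have hp2 : 2 ≤ p := by omega
        have hpm1Icc : p-1 ∈ Finset.Icc 1 j := by rw [Finset.mem_Icc]; omega
        have hc1 : ((p-1:ℕ):ℝ) = (p:ℝ) - 1 := by
          rw [Nat.cast_sub (by omega)]; norm_num
        have hpma : ψ (p-1) ≤ a := by
          by_contra hc; push_neg at hc
          have hlt : ψ (p-1) < b :=
            lt_of_le_of_lt (hmono (p-1) p (by omega) (by omega) hpIcc.2) hpb
          have hF' : p - 1 ∈ F := Finset.mem_filter.mpr ⟨hpm1Icc, ⟨hc, hlt⟩⟩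
          have := F.min'_le _ hF'
          omega
        by_cases hqj : q = j
        · refine ⟨|1 - ψ (p-1) - ((j:ℝ) - (↑(p-1):ℝ) + ((0:ℤ):ℝ))/j|,
            Or.inl ⟨p-1, hpm1Icc, 0, by simp, Or.inr rfl⟩, ?_⟩
          have hqjR : (q:ℝ) = j := by rw [hqj]
          have hinner : 1 - ψ (p-1) - ((j:ℝ) - (↑(p-1):ℝ) + ((0:ℤ):ℝ))/j
              = 1 - ψ (p-1) - ((j:ℝ) - p + 1)/j := by rw [hc1]; push_cast; ring
          calc (b - a) - ((q:ℝ) - p + 1)/j = (b - a) - ((j:ℝ) - p + 1)/j := by rw [hqjR]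
            _ ≤ 1 - ψ (p-1) - ((j:ℝ) - p + 1)/j := by linarith
            _ = _ := hinner.symm
            _ ≤ _ := le_abs_self _
        · have hq1Icc : q+1 ∈ Finset.Icc 1 j := by
            rw [Finset.mem_Icc]; omega
          have hq1a : a < ψ (q+1) :=
            lt_of_lt_of_le hqa (hmono q (q+1) (by omega) (by omega) (by omega))
          have hq1b : b ≤ ψ (q+1) := by
            by_contra hc; push_neg at hc
            have hF' : q+1 ∈ F := Finset.mem_filter.mpr ⟨hq1Icc, ⟨hq1a, hc⟩⟩
            have := F.le_max' _ hF'
            omega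
          refine ⟨|ψ (q+1) - ψ (p-1) - ((↑(q+1):ℝ) - (↑(p-1):ℝ) + ((-1:ℤ):ℝ))/j|,
            Or.inr ⟨q+1, hq1Icc, p-1, hpm1Icc, -1, by simp, rfl⟩, ?_⟩
          have hinner : ψ (q+1) - ψ (p-1) - ((↑(q+1):ℝ) - (↑(p-1):ℝ) + ((-1:ℤ):ℝ))/j
              = ψ (q+1) - ψ (p-1) - ((q:ℝ) - p + 1)/j := by rw [hc1]; push_cast; ring
          calc (b - a) - ((q:ℝ) - p + 1)/j
              ≤ ψ (q+1) - ψ (p-1) - ((q:ℝ) - p + 1)/j := by linarith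
            _ = _ := hinner.symm
            _ ≤ _ := le_abs_self _

end DiscAux

/-- Discrepancy formula (Lemma 6.1): for the uniform atomic measure
`λ = (1/j) ∑_l δ_{ψ_l}` on ordered points `0 ≤ ψ_1 ≤ ⋯ ≤ ψ_j ≤ 1` and `η`
Lebesgue measure on `[0,1]`, the discrepancy
`D(λ,η) = sup{|λ(I) - η(I)| : I = (a,b) ⊂ [0,1]}` equals the maximum over
`l = 1,…,j` and `i ∈ {0,1}` of `|ψ_l - (l-i)/j|` and `|1 - ψ_l - (j-l+i)/j|`,
and over `l,k` and `i ∈ {-1,1}` of `|ψ_l - ψ_k - (l-k+i)/j|`. -/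
theorem discrepancy_finite_formula
    (j : ℕ) (hj : 1 ≤ j) (ψ : ℕ → ℝ)
    (hmem : ∀ l ∈ Finset.Icc 1 j, ψ l ∈ Set.Icc (0 : ℝ) 1)
    (hmono : ∀ l k, 1 ≤ l → l ≤ k → k ≤ j → ψ l ≤ ψ k) :
    sSup {e : ℝ | ∃ a b : ℝ, 0 ≤ a ∧ a ≤ b ∧ b ≤ 1 ∧
        e = |(((Finset.Icc 1 j).filter fun l => ψ l ∈ Set.Ioo a b).card : ℝ) / j
              - (b - a)|} =
    sSup ({e : ℝ | ∃ l ∈ Finset.Icc 1 j, ∃ i ∈ ({0, 1} : Set ℤ),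
            e = |ψ l - ((l : ℝ) - (i : ℝ)) / j| ∨
            e = |1 - ψ l - ((j : ℝ) - (l : ℝ) + (i : ℝ)) / j|} ∪
          {e : ℝ | ∃ l ∈ Finset.Icc 1 j, ∃ k ∈ Finset.Icc 1 j,
            ∃ i ∈ ({-1, 1} : Set ℤ),
            e = |ψ l - ψ k - ((l : ℝ) - (k : ℝ) + (i : ℝ)) / j|}) := by
  
  show sSup (DiscAux.S j ψ) = sSup (DiscAux.T j ψ)
  have hj0 : (0:ℝ) < j := by exact_mod_cast hj
  have hjne : ((j:ℝ)) ≠ 0 := hj0.ne'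
  have hjpos : (0:ℝ) ≤ ((j:ℝ))⁻¹ := by positivity
  apply le_antisymm
  · apply csSup_le (DiscAux.S_nonempty j ψ)
    rintro s ⟨a, b, h0, hab, hb1, rfl⟩
    obtain ⟨t, ht, hle⟩ := DiscAux.dir1 j ψ hj hmem hmono a b h0 hab hb1
    exact hle.trans (le_csSup (DiscAux.T_bdd j ψ hj hmem) ht)
  · apply csSup_le (DiscAux.T_nonempty j ψ hj)
    rintro t (⟨l, hl, i, hi, (rfl | rfl)⟩ | ⟨l, hl, k, hk, i, hi, rfl⟩)
    · have h1 := DiscAux.L1 j ψ hj hmem hmono l hl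
      have h2 := DiscAux.L2 j ψ hj hmem hmono l hl
      have hi2 : i = 0 ∨ i = 1 := by simpa using hi
      rw [abs_le]
      ring_nf at h1 h2
      rcases hi2 with rfl | rfl <;> push_cast <;>
        constructor <;> ring_nf <;> linarith [hjpos]
    · have h1 := DiscAux.L1 j ψ hj hmem hmono l hl
      have h2 := DiscAux.L2 j ψ hj hmem hmono l hl
      have hi2 : i = 0 ∨ i = 1 := by simpa using hi
      have hEq : 1 - ψ l - ((j:ℝ) - (l:ℝ) + (i:ℝ))/j = ((l:ℝ) - (i:ℝ))/j - ψ l := by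
        field_simp
        ring
      rw [hEq, abs_le]
      ring_nf at h1 h2
      rcases hi2 with rfl | rfl <;> push_cast <;>
        constructor <;> ring_nf <;> linarith [hjpos]
    · have h1 := DiscAux.L4 j ψ hj hmem hmono l k hl hk
      have h2 := DiscAux.L4 j ψ hj hmem hmono k l hk hl
      have hi2 : i = -1 ∨ i = 1 := by simpa using hi
      rw [abs_le]
      ring_nf at h1 h2
      rcases hi2 with rfl | rfl <;> push_cast <;>
        constructor <;> ring_nf <;> linarith [hjpos]
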